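/- Let g : ℝ → ℝ be continuous with compact support contained in (0, ∞), and define v(t,r) = (4πt)^{−1/2} ∫₀^∞ k(t,r,s) g(s) ds for t > 0 and r ∈ ℝ. Then v(t,0) = 0 for every t > 0, and v satisfies the one-dimensional heat equation ∂ₜ v(t,r) = ∂ᵣ² v(t,r) for all t > 0 and r > 0. -/

import Mathlib

open MeasureTheory

/-- `k(t,r,s) = exp(-(r-s)²/(4t)) - exp(-(r+s)²/(4t))`,
the (unnormalized) Dirichlet heat kernel of the half-line. -/
noncomputable def halfLineKernel (t r s : ℝ) : ℝ :=
  Real.exp (-(r - s) ^ 2 / (4 * t)) - Real.exp (-(r + s) ^ 2 / (4 * t))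

/-- `v(t,r) = (4πt)^{-1/2} ∫₀^∞ k(t,r,s) g(s) ds`. -/
noncomputable def halfLineSol (g : ℝ → ℝ) (t r : ℝ) : ℝ :=
  (4 * Real.pi * t) ^ (-(1 : ℝ) / 2) * ∫ s in Set.Ioi (0 : ℝ), halfLineKernel t r s * g s

noncomputable def phi (t x : ℝ) : ℝ :=
  (4 * Real.pi * t) ^ (-(1 : ℝ) / 2) * Real.exp (-x ^ 2 / (4 * t))

noncomputable def phi1 (t x : ℝ) : ℝ := (-x / (2 * t)) * phi t x

noncomputable def phi2 (t x : ℝ) : ℝ := (x ^ 2 / (4 * t ^ 2) - 1 / (2 * t)) * phi t x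

lemma hasDerivAt_phi_x {t : ℝ} (ht : 0 < t) (x : ℝ) :
    HasDerivAt (fun x => phi t x) (phi1 t x) x := by
  have h1 : HasDerivAt (fun x : ℝ => -x ^ 2 / (4 * t)) (-(2 * x) / (4 * t)) x := by
    simpa using ((hasDerivAt_pow 2 x).neg).div_const (4 * t)
  have h2 := (h1.exp).const_mul ((4 * Real.pi * t) ^ (-(1 : ℝ) / 2))
  refine h2.congr_deriv (Eq.symm ?_)
  unfold phi1 phi
  have : t ≠ 0 := ne_of_gt ht
  field_simp
  ring

lemma hasDerivAt_phi1_x {t : ℝ} (ht : 0 < t) (x : ℝ) :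
    HasDerivAt (fun x => phi1 t x) (phi2 t x) x := by
  have h1 : HasDerivAt (fun x : ℝ => -x / (2 * t)) (-1 / (2 * t)) x := by
    simpa using ((hasDerivAt_id x).neg).div_const (2 * t)
  have h2 := h1.mul (hasDerivAt_phi_x ht x)
  refine h2.congr_deriv (Eq.symm ?_)
  unfold phi2 phi1
  have : t ≠ 0 := ne_of_gt ht
  field_simp
  ring

lemma hasDerivAt_phi_t {t : ℝ} (ht : 0 < t) (x : ℝ) :
    HasDerivAt (fun τ => phi τ x) (phi2 t x) t := by
  have hπ : (0:ℝ) < Real.pi := Real.pi_pos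
  have hb : (0:ℝ) < 4 * Real.pi * t := by positivity
  have hbase : HasDerivAt (fun τ : ℝ => 4 * Real.pi * τ) (4 * Real.pi) t := by
    simpa using (hasDerivAt_id t).const_mul (4 * Real.pi)
  have hc : HasDerivAt (fun τ : ℝ => (4 * Real.pi * τ) ^ (-(1 : ℝ) / 2))
      ((-(1 : ℝ) / 2) * (4 * Real.pi * t) ^ ((-(1 : ℝ) / 2) - 1) * (4 * Real.pi)) t := by
    exact (Real.hasDerivAt_rpow_const (Or.inl (ne_of_gt hb))).comp t hbase
  have hinnerfun : (fun τ : ℝ => -x ^ 2 / (4 * τ)) = fun τ : ℝ => (-x ^ 2 / 4) * τ⁻¹ := by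
    funext τ; ring
  have hinner : HasDerivAt (fun τ : ℝ => -x ^ 2 / (4 * τ)) (x ^ 2 / (4 * t ^ 2)) t := by
    rw [hinnerfun]
    have h := (hasDerivAt_inv (ne_of_gt ht)).const_mul (-x ^ 2 / 4)
    refine h.congr_deriv (Eq.symm ?_)
    field_simp
  have h2 := hc.mul hinner.exp
  refine h2.congr_deriv (Eq.symm ?_)
  unfold phi2 phi
  have hkey : (4 * Real.pi * t) ^ ((-(1 : ℝ) / 2) - 1)
      = (4 * Real.pi * t) ^ (-(1 : ℝ) / 2) / (4 * Real.pi * t) := by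
    rw [Real.rpow_sub hb, Real.rpow_one]
  rw [hkey]
  have ht' : t ≠ 0 := ne_of_gt ht
  have hπ' : Real.pi ≠ 0 := ne_of_gt hπ
  field_simp
  ring

lemma deriv_integral_kernel (g : ℝ → ℝ) (hg : Continuous g) (hsupp : HasCompactSupport g)
    (H H' : ℝ → ℝ → ℝ) (x₀ ε : ℝ) (hε : 0 < ε)
    (hHc : ∀ x ∈ Metric.ball x₀ ε, Continuous fun s => H x s)
    (hH'c : Continuous fun s => H' x₀ s)
    (hH'j : ContinuousOn (fun p : ℝ × ℝ => H' p.1 p.2)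
      (Metric.closedBall x₀ (ε / 2) ×ˢ tsupport g))
    (hd : ∀ s : ℝ, ∀ x ∈ Metric.ball x₀ ε, HasDerivAt (fun y => H y s) (H' x s) x) :
    HasDerivAt (fun x => ∫ s in Set.Ioi (0:ℝ), H x s * g s)
      (∫ s in Set.Ioi (0:ℝ), H' x₀ s * g s) x₀ := by
  have hK : IsCompact (Metric.closedBall x₀ (ε / 2) ×ˢ tsupport g) :=
    (isCompact_closedBall _ _).prod hsupp
  have hcont : ContinuousOn (fun p : ℝ × ℝ => H' p.1 p.2 * g p.2)
      (Metric.closedBall x₀ (ε / 2) ×ˢ tsupport g) :=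
    hH'j.mul ((hg.comp continuous_snd).continuousOn)
  obtain ⟨C, hC⟩ := hK.exists_bound_of_continuousOn hcont
  refine (hasDerivAt_integral_of_dominated_loc_of_deriv_le (μ := volume.restrict (Set.Ioi 0))
    (F := fun x s => H x s * g s) (F' := fun x s => H' x s * g s)
    (bound := (tsupport g).indicator fun _ => C) (Metric.ball_mem_nhds x₀ (half_pos hε)) ?_ ?_ ?_ ?_ ?_ ?_).2
  · filter_upwards [Metric.ball_mem_nhds x₀ hε] with x hx
    exact ((hHc x hx).mul hg).aestronglyMeasurable
  · have hcont0 : Continuous fun s => H x₀ s * g s :=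
      (hHc x₀ (Metric.mem_ball_self hε)).mul hg
    have hcs : HasCompactSupport fun s => H x₀ s * g s := hsupp.mul_left
    exact (hcont0.integrable_of_hasCompactSupport hcs).restrict
  · exact (hH'c.mul hg).aestronglyMeasurable
  · refine Filter.Eventually.of_forall fun s => fun x hx => ?_
    by_cases hs : s ∈ tsupport g
    · rw [Set.indicator_of_mem hs]
      exact hC (x, s) ⟨Metric.ball_subset_closedBall hx, hs⟩
    · have hgs : g s = 0 := image_eq_zero_of_notMem_tsupport hs
      simp [hgs, Set.indicator_of_notMem hs]
  · have hint : Integrable ((tsupport g).indicator fun _ : ℝ => C) volume := by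
      rw [integrable_indicator_iff (isClosed_tsupport g).measurableSet]
      exact integrableOn_const hsupp.isCompact.measure_lt_top.ne
    exact hint.restrict
  · refine Filter.Eventually.of_forall fun s => fun x hx => ?_
    exact (hd s x (Metric.ball_subset_ball (by linarith) hx)).mul_const (g s)

/-- For continuous `g` with compact support in `(0,∞)`, the function
`v(t,r) = (4πt)^{-1/2} ∫₀^∞ k(t,r,s) g(s) ds` vanishes at `r = 0` and solves the
one-dimensional heat equation `∂ₜ v = ∂ᵣ² v` for `t > 0`, `r > 0`. -/
theorem halfLineSol_boundary_and_heat_equation (g : ℝ → ℝ) (hg : Continuous g)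
    (hsupp : HasCompactSupport g) (hsub : tsupport g ⊆ Set.Ioi (0 : ℝ)) :
    (∀ t : ℝ, 0 < t → halfLineSol g t 0 = 0) ∧
    ∀ t : ℝ, 0 < t → ∀ r : ℝ, 0 < r →
      DifferentiableAt ℝ (fun ρ => halfLineSol g t ρ) r ∧
      DifferentiableAt ℝ (deriv fun ρ => halfLineSol g t ρ) r ∧
      HasDerivAt (fun τ => halfLineSol g τ r)
        (deriv (deriv fun ρ => halfLineSol g t ρ) r) t := by
  have hv : ∀ τ ρ : ℝ, halfLineSol g τ ρ
      = ∫ s in Set.Ioi (0:ℝ), (phi τ (ρ - s) - phi τ (ρ + s)) * g s := by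
    intro τ ρ
    unfold halfLineSol
    rw [← MeasureTheory.integral_const_mul]
    congr 1
    funext s
    unfold halfLineKernel phi
    ring
  constructor
  · intro t ht
    have h0 : ∀ s : ℝ, halfLineKernel t 0 s = 0 := by
      intro s; simp [halfLineKernel]
    simp [halfLineSol, h0]
  · intro t ht r hr
    have hfun : (fun ρ => halfLineSol g t ρ)
        = fun ρ => ∫ s in Set.Ioi (0:ℝ), (phi t (ρ - s) - phi t (ρ + s)) * g s := by
      funext ρ; exact hv t ρ
    -- first derivative in r, at every point
    have h1 : ∀ ρ : ℝ, HasDerivAt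
        (fun y => ∫ s in Set.Ioi (0:ℝ), (phi t (y - s) - phi t (y + s)) * g s)
        (∫ s in Set.Ioi (0:ℝ), (phi1 t (ρ - s) - phi1 t (ρ + s)) * g s) ρ := by
      intro ρ
      refine deriv_integral_kernel g hg hsupp
        (fun y s => phi t (y - s) - phi t (y + s))
        (fun y s => phi1 t (y - s) - phi1 t (y + s)) ρ 1 one_pos ?_ ?_ ?_ ?_
      · intro x _
        unfold phi; fun_prop
      · unfold phi1 phi; fun_prop
      · apply Continuous.continuousOn
        unfold phi1 phi; fun_prop
      · intro s y _
        have a := (hasDerivAt_phi_x ht (y - s)).comp y ((hasDerivAt_id y).sub_const s)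
        have b := (hasDerivAt_phi_x ht (y + s)).comp y ((hasDerivAt_id y).add_const s)
        exact (a.sub b).congr_deriv (by simp)
    have hderiv1 : (deriv fun ρ => halfLineSol g t ρ)
        = fun ρ => ∫ s in Set.Ioi (0:ℝ), (phi1 t (ρ - s) - phi1 t (ρ + s)) * g s := by
      funext ρ
      rw [hfun]
      exact (h1 ρ).deriv
    -- second derivative in r
    have h2 : HasDerivAt
        (fun y => ∫ s in Set.Ioi (0:ℝ), (phi1 t (y - s) - phi1 t (y + s)) * g s)
        (∫ s in Set.Ioi (0:ℝ), (phi2 t (r - s) - phi2 t (r + s)) * g s) r := by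
      refine deriv_integral_kernel g hg hsupp
        (fun y s => phi1 t (y - s) - phi1 t (y + s))
        (fun y s => phi2 t (y - s) - phi2 t (y + s)) r 1 one_pos ?_ ?_ ?_ ?_
      · intro x _
        unfold phi1 phi; fun_prop
      · unfold phi2 phi; fun_prop
      · apply Continuous.continuousOn
        unfold phi2 phi; fun_prop
      · intro s y _
        have a := (hasDerivAt_phi1_x ht (y - s)).comp y ((hasDerivAt_id y).sub_const s)
        have b := (hasDerivAt_phi1_x ht (y + s)).comp y ((hasDerivAt_id y).add_const s)
        exact (a.sub b).congr_deriv (by simp)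
    have hderiv2 : deriv (deriv fun ρ => halfLineSol g t ρ) r
        = ∫ s in Set.Ioi (0:ℝ), (phi2 t (r - s) - phi2 t (r + s)) * g s := by
      rw [hderiv1]
      exact h2.deriv
    -- time derivative
    have hjoint : ContinuousOn (fun p : ℝ × ℝ => phi2 p.1 (r - p.2) - phi2 p.1 (r + p.2))
        (Metric.closedBall t (t / 2) ×ˢ tsupport g) := by
      intro p hp
      have hp1 : (0:ℝ) < p.1 := by
        have := hp.1
        rw [Metric.mem_closedBall, Real.dist_eq] at this
        have := abs_le.1 this
        linarith [this.1]
      have hp1' : p.1 ≠ 0 := ne_of_gt hp1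
      have hb : (4 * Real.pi * p.1) ≠ 0 := by positivity
      have hinner : ContinuousAt (fun q : ℝ × ℝ => 4 * Real.pi * q.1) p := by fun_prop
      have hc : ContinuousAt (fun q : ℝ × ℝ => (4 * Real.pi * q.1) ^ (-(1 : ℝ) / 2)) p :=
        hinner.rpow_const (Or.inl hb)
      have hphi2 : ∀ F : ℝ × ℝ → ℝ, Continuous F →
          ContinuousAt (fun q : ℝ × ℝ => phi2 q.1 (F q)) p := by
        intro F hF
        unfold phi2 phi
        apply ContinuousAt.mul
        · apply ContinuousAt.sub
          · exact ContinuousAt.div (by fun_prop) (by fun_prop) (by positivity)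
          · exact ContinuousAt.div (by fun_prop) (by fun_prop) (by positivity)
        · apply ContinuousAt.mul hc
          exact (Real.continuous_exp.continuousAt).comp
            (ContinuousAt.div (by fun_prop) (by fun_prop) (by positivity))
      exact ((hphi2 _ (by fun_prop)).sub (hphi2 _ (by fun_prop))).continuousWithinAt
    have h3 : HasDerivAt
        (fun τ => ∫ s in Set.Ioi (0:ℝ), (phi τ (r - s) - phi τ (r + s)) * g s)
        (∫ s in Set.Ioi (0:ℝ), (phi2 t (r - s) - phi2 t (r + s)) * g s) t := by
      refine deriv_integral_kernel g hg hsupp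
        (fun τ s => phi τ (r - s) - phi τ (r + s))
        (fun τ s => phi2 τ (r - s) - phi2 τ (r + s)) t t ht ?_ ?_ hjoint ?_
      · intro x _
        unfold phi; fun_prop
      · unfold phi2 phi; fun_prop
      · intro s x hx
        have hx' : 0 < x := by
          rw [Metric.mem_ball, Real.dist_eq] at hx
          have := abs_lt.1 hx
          linarith [this.1]
        exact (hasDerivAt_phi_t hx' (r - s)).sub (hasDerivAt_phi_t hx' (r + s))
    refine ⟨?_, ?_, ?_⟩
    · rw [hfun]
      exact (h1 r).differentiableAt
    · rw [hderiv1]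
      exact h2.differentiableAt
    · rw [hderiv2]
      have : (fun τ => halfLineSol g τ r)
          = fun τ => ∫ s in Set.Ioi (0:ℝ), (phi τ (r - s) - phi τ (r + s)) * g s := by
        funext τ; exact hv τ r
      rw [this]
      exact h3
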